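/- Let c = (0, 0, 0, 1) ∈ ℝ⁴ and let q : ℝ³ × {0} → ℝ⁴ be the map q(x) = c + (x − c)/‖x − c‖. Then for all x, y ∈ ℝ³ × {0}, the image under q of the straight-line segment [x, y] is contained in the intersection of the unit sphere {z ∈ ℝ⁴ : ‖z − c‖ = 1} with the affine span of {x, y, c}; moreover q is injective on [x, y]. -/
import Mathlib


noncomputable section

/-- The center `c = (0, 0, 0, 1)` of the sphere, in `ℝ⁴`. -/
def sphereCenter : EuclideanSpace ℝ (Fin 4) := EuclideanSpace.single 3 1

/-- The radial projection `q(x) = c + (x − c)/‖x − c‖` toward the center `c`. -/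
def radialProj (x : EuclideanSpace ℝ (Fin 4)) : EuclideanSpace ℝ (Fin 4) :=
  sphereCenter + ‖x - sphereCenter‖⁻¹ • (x - sphereCenter)

lemma sphereCenter_apply3 : sphereCenter 3 = 1 := by
  simp [sphereCenter, EuclideanSpace.single_apply]

lemma coord_le_norm (w : EuclideanSpace ℝ (Fin 4)) : |w 3| ≤ ‖w‖ := by
  have h := abs_real_inner_le_norm (EuclideanSpace.single 3 (1 : ℝ)) w
  rwa [EuclideanSpace.inner_single_left, EuclideanSpace.norm_single, norm_one, one_mul,
    map_one, one_mul] at h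

lemma one_le_norm_sub (z : EuclideanSpace ℝ (Fin 4)) (hz : z 3 = 0) :
    1 ≤ ‖z - sphereCenter‖ := by
  have h := coord_le_norm (z - sphereCenter)
  have : (z - sphereCenter) 3 = -1 := by
    simp [PiLp.sub_apply, hz, sphereCenter_apply3]
  rwa [this, abs_neg, abs_one] at h

lemma seg_coord {x y : EuclideanSpace ℝ (Fin 4)} (hx : x 3 = 0) (hy : y 3 = 0)
    {z : EuclideanSpace ℝ (Fin 4)} (hz : z ∈ segment ℝ x y) : z 3 = 0 := by
  obtain ⟨a, b, _, _, hab, rfl⟩ := hz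
  simp [PiLp.add_apply, PiLp.smul_apply, hx, hy]

/-- For `x, y ∈ ℝ³ × {0} ⊆ ℝ⁴`, the image under `q(z) = c + (z − c)/‖z − c‖` of the segment
`[x, y]` is contained in the intersection of the unit sphere centered at `c` with the affine
span of `{x, y, c}`; moreover `q` is injective on `[x, y]`. In other words, `q` maps segments
of `ℝ³` to arcs of great circles of the sphere. -/
theorem radialProj_maps_segment_to_great_circle
    (x y : EuclideanSpace ℝ (Fin 4)) (hx : x 3 = 0) (hy : y 3 = 0) :
    radialProj '' segment ℝ x y ⊆
      Metric.sphere sphereCenter 1 ∩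
        (affineSpan ℝ ({x, y, sphereCenter} : Set (EuclideanSpace ℝ (Fin 4))) :
          Set (EuclideanSpace ℝ (Fin 4))) ∧
    Set.InjOn radialProj (segment ℝ x y) := by
  constructor
  · rintro _ ⟨z, hz, rfl⟩
    have hz3 : z 3 = 0 := seg_coord hx hy hz
    have hnorm : 1 ≤ ‖z - sphereCenter‖ := one_le_norm_sub z hz3
    have hne : ‖z - sphereCenter‖ ≠ 0 := by linarith
    constructor
    · simp only [Metric.mem_sphere, radialProj]
      rw [dist_eq_norm, add_sub_cancel_left, norm_smul, norm_inv, norm_norm,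
        inv_mul_cancel₀ hne]
    · -- affine span membership
      have hxm : x ∈ affineSpan ℝ ({x, y, sphereCenter} : Set (EuclideanSpace ℝ (Fin 4))) :=
        subset_affineSpan ℝ _ (by simp)
      have hym : y ∈ affineSpan ℝ ({x, y, sphereCenter} : Set (EuclideanSpace ℝ (Fin 4))) :=
        subset_affineSpan ℝ _ (by simp)
      have hcm : sphereCenter ∈
          affineSpan ℝ ({x, y, sphereCenter} : Set (EuclideanSpace ℝ (Fin 4))) :=
        subset_affineSpan ℝ _ (by simp)
      have hzm : z ∈ affineSpan ℝ ({x, y, sphereCenter} : Set (EuclideanSpace ℝ (Fin 4))) := by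
        obtain ⟨a, b, _, _, hab, rfl⟩ := hz
        have : a • x + b • y = b • (y -ᵥ x) +ᵥ x := by
          have : a = 1 - b := by linarith
          subst this
          simp [sub_smul, smul_sub]
          abel
        rw [this]
        exact AffineSubspace.smul_vsub_vadd_mem _ b hym hxm hxm
      have : radialProj z = ‖z - sphereCenter‖⁻¹ • (z -ᵥ sphereCenter) +ᵥ sphereCenter := by
        simp [radialProj, vsub_eq_sub, vadd_eq_add]
        abel
      rw [this]
      exact AffineSubspace.smul_vsub_vadd_mem _ _ hzm hcm hcm
  · intro a ha b hb hab
    have ha3 : a 3 = 0 := seg_coord hx hy ha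
    have hb3 : b 3 = 0 := seg_coord hx hy hb
    have hna : 1 ≤ ‖a - sphereCenter‖ := one_le_norm_sub a ha3
    have hnb : 1 ≤ ‖b - sphereCenter‖ := one_le_norm_sub b hb3
    have hea : ‖a - sphereCenter‖ ≠ 0 := by linarith
    have heb : ‖b - sphereCenter‖ ≠ 0 := by linarith
    have h1 : ‖a - sphereCenter‖⁻¹ • (a - sphereCenter)
        = ‖b - sphereCenter‖⁻¹ • (b - sphereCenter) := by
      have := hab
      simp only [radialProj] at this
      exact add_left_cancel this
    -- compare coordinate 3
    have hca : (a - sphereCenter) 3 = -1 := by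
      simp [PiLp.sub_apply, ha3, sphereCenter_apply3]
    have hcb : (b - sphereCenter) 3 = -1 := by
      simp [PiLp.sub_apply, hb3, sphereCenter_apply3]
    have h3 : ‖a - sphereCenter‖⁻¹ * (-1) = ‖b - sphereCenter‖⁻¹ * (-1) := by
      have := congrFun (congrArg (fun v : EuclideanSpace ℝ (Fin 4) => (v : Fin 4 → ℝ)) h1) 3
      simpa [PiLp.smul_apply, hca, hcb] using this
    have hninv : ‖a - sphereCenter‖⁻¹ = ‖b - sphereCenter‖⁻¹ := by linarith
    have hneq : ‖a - sphereCenter‖ = ‖b - sphereCenter‖ :=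
      inv_injective hninv
    rw [hneq] at h1
    have := smul_right_injective (EuclideanSpace ℝ (Fin 4)) (inv_ne_zero heb) h1
    have : a - sphereCenter = b - sphereCenter := this
    exact sub_left_injective this
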